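/- Suppose (v₁, v₂) with v₁, v₂ ≥ 0 is feasible for (P-S4), i.e., (a·v₂ + √Q·b)²/(σ² + a²v₁²) ≥ ρ and v₁² + v₂² ≤ P, and suppose v₁² + v₂² < P. Set δ = (P − v₁² − v₂²)/(ρ + 1), v̂₁ = √(v₁² + δ), v̂₂ = √(v₂² + ρδ). Then v̂₁² + v̂₂² = P, (a·v̂₂ + √Q·b)²/(σ² + a²v̂₁²) > ρ, and v̂₁ > v₁. Consequently, every optimal solution of (P-S4) satisfies v₁² + v₂² = P. -/
import Mathlib

lemma improve_aux (a b P Q σ2 ρ v1 v2 δ : ℝ) (ha : 0 < a) (hb : 0 < b)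
    (hQ : 0 < Q) (hσ : 0 < σ2) (hρ : 0 < ρ)
    (hv1 : 0 ≤ v1) (hv2 : 0 ≤ v2)
    (hcon : (a * v2 + Real.sqrt Q * b) ^ 2 / (σ2 + a ^ 2 * v1 ^ 2) ≥ ρ)
    (hlt : v1 ^ 2 + v2 ^ 2 < P)
    (hδ : δ = (P - v1 ^ 2 - v2 ^ 2) / (ρ + 1)) :
    Real.sqrt (v1 ^ 2 + δ) ^ 2 + Real.sqrt (v2 ^ 2 + ρ * δ) ^ 2 = P ∧
    (a * Real.sqrt (v2 ^ 2 + ρ * δ) + Real.sqrt Q * b) ^ 2 /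
        (σ2 + a ^ 2 * Real.sqrt (v1 ^ 2 + δ) ^ 2) > ρ ∧
    Real.sqrt (v1 ^ 2 + δ) > v1 := by
  have hρ1 : (0:ℝ) < ρ + 1 := by linarith
  have hδpos : 0 < δ := by
    rw [hδ]; apply div_pos <;> linarith
  have hsq1 : Real.sqrt (v1 ^ 2 + δ) ^ 2 = v1 ^ 2 + δ := by
    apply Real.sq_sqrt; nlinarith [sq_nonneg v1]
  have hsq2 : Real.sqrt (v2 ^ 2 + ρ * δ) ^ 2 = v2 ^ 2 + ρ * δ := by
    apply Real.sq_sqrt; nlinarith [sq_nonneg v2]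
  have hden : 0 < σ2 + a ^ 2 * v1 ^ 2 := by positivity
  have hcon' : (a * v2 + Real.sqrt Q * b) ^ 2 ≥ ρ * (σ2 + a ^ 2 * v1 ^ 2) := by
    rw [ge_iff_le, le_div_iff₀ hden] at hcon
    linarith
  have hsqQ : 0 < Real.sqrt Q := Real.sqrt_pos.mpr hQ
  have hu2gt : Real.sqrt (v2 ^ 2 + ρ * δ) > v2 := by
    have h2n : (0:ℝ) ≤ Real.sqrt (v2 ^ 2 + ρ * δ) := Real.sqrt_nonneg _
    nlinarith [hsq2, mul_pos hρ hδpos]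
  have hu1gt : Real.sqrt (v1 ^ 2 + δ) > v1 := by
    have h1n : (0:ℝ) ≤ Real.sqrt (v1 ^ 2 + δ) := Real.sqrt_nonneg _
    nlinarith [hsq1]
  refine ⟨?_, ?_, hu1gt⟩
  · rw [hsq1, hsq2, hδ]; field_simp; ring
  · rw [hsq1, gt_iff_lt, lt_div_iff₀ (by positivity)]
    nlinarith [hsq2, mul_pos (mul_pos ha hsqQ) hb, hu2gt, mul_pos hρ hδpos,
      mul_pos (mul_pos (mul_pos ha hsqQ) hb) (sub_pos.mpr hu2gt)]

/-- The power constraint of (P-S4) is tight at the optimum: any strictly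
interior feasible point can be strictly improved, hence every optimal solution
satisfies `v₁² + v₂² = P`. -/
theorem stmt_6 (a b P Q σ2 ρ : ℝ) (ha : 0 < a) (hb : 0 < b) (hP : 0 < P)
    (hQ : 0 < Q) (hσ : 0 < σ2) (hρ : 0 < ρ)
    (v1 v2 : ℝ) (hv1 : 0 ≤ v1) (hv2 : 0 ≤ v2)
    (hcon : (a * v2 + Real.sqrt Q * b) ^ 2 / (σ2 + a ^ 2 * v1 ^ 2) ≥ ρ)
    (hpow : v1 ^ 2 + v2 ^ 2 ≤ P)
    (hlt : v1 ^ 2 + v2 ^ 2 < P)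
    (δ hv1hat hv2hat : ℝ)
    (hδ : δ = (P - v1 ^ 2 - v2 ^ 2) / (ρ + 1))
    (h1 : hv1hat = Real.sqrt (v1 ^ 2 + δ))
    (h2 : hv2hat = Real.sqrt (v2 ^ 2 + ρ * δ)) :
    (hv1hat ^ 2 + hv2hat ^ 2 = P ∧
     (a * hv2hat + Real.sqrt Q * b) ^ 2 / (σ2 + a ^ 2 * hv1hat ^ 2) > ρ ∧
     hv1hat > v1) ∧
    (∀ w1 w2 : ℝ, 0 ≤ w1 → 0 ≤ w2 →
      (a * w2 + Real.sqrt Q * b) ^ 2 / (σ2 + a ^ 2 * w1 ^ 2) ≥ ρ →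
      w1 ^ 2 + w2 ^ 2 ≤ P →
      (∀ u1 u2 : ℝ, 0 ≤ u1 → 0 ≤ u2 →
        (a * u2 + Real.sqrt Q * b) ^ 2 / (σ2 + a ^ 2 * u1 ^ 2) ≥ ρ →
        u1 ^ 2 + u2 ^ 2 ≤ P →
        a ^ 2 * u1 ^ 2 / σ2 ≤ a ^ 2 * w1 ^ 2 / σ2) →
      w1 ^ 2 + w2 ^ 2 = P) := by
  constructor
  · rw [h1, h2]
    exact improve_aux a b P Q σ2 ρ v1 v2 δ ha hb hQ hσ hρ hv1 hv2 hcon hlt hδ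
  · intro w1 w2 hw1 hw2 hwcon hwpow hopt
    by_contra hne
    have hwlt : w1 ^ 2 + w2 ^ 2 < P := lt_of_le_of_ne hwpow hne
    obtain ⟨hsum, hcon2, hgt⟩ := improve_aux a b P Q σ2 ρ w1 w2
      ((P - w1 ^ 2 - w2 ^ 2) / (ρ + 1)) ha hb hQ hσ hρ hw1 hw2 hwcon hwlt rfl
    have := hopt (Real.sqrt (w1 ^ 2 + (P - w1 ^ 2 - w2 ^ 2) / (ρ + 1)))
      (Real.sqrt (w2 ^ 2 + ρ * ((P - w1 ^ 2 - w2 ^ 2) / (ρ + 1))))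
      (Real.sqrt_nonneg _) (Real.sqrt_nonneg _) (le_of_lt hcon2) (le_of_eq hsum)
    have h1gt2 : w1 ^ 2 < Real.sqrt (w1 ^ 2 + (P - w1 ^ 2 - w2 ^ 2) / (ρ + 1)) ^ 2 := by
      nlinarith
    rw [div_le_div_iff_of_pos_right hσ] at this
    nlinarith [sq_pos_of_pos ha]
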